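/- Let A be an (n+1)×(n+1) Hermitian matrix of the block 'arrowhead' form: A_{00} = y, A_{0k} = conj(z_k), A_{k0} = z_k, A_{kk} = x_k for 1 ≤ k ≤ n, and A_{jk} = 0 for distinct j, k ≥ 1. Then the '2-Hessian-type' quantity F(A) := y·Σ_{k=1}^n x_k − Σ_{k=1}^n |z_k|² satisfies: for fixed x_k > 0 and y > 0 with F(A) > 0, log F(A) is a concave function of (y, x_1, ..., x_n, z_1, ..., z_n) on the region {y > 0, Σ x_k > 0, F > 0}. -/

import Mathlib

open Finset

private lemma alg_ineq19 (u v c d E : ℝ) (hc : 0 ≤ c) (hd : 0 ≤ d)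
    (h1 : E ^ 2 = (u ^ 2 - c ^ 2) * (v ^ 2 - d ^ 2)) (hcu : c ≤ u) (hdv : d ≤ v) :
    E ≤ u * v - c * d := by
  have hX0 : 0 ≤ u * v - c * d := by nlinarith
  have hE2le : E ^ 2 ≤ (u * v - c * d) ^ 2 := by nlinarith [sq_nonneg (u * d - v * c)]
  nlinarith

private lemma key_ineq19 (yp yq sp sq wp wq : ℝ)
    (hyp : 0 < yp) (hyq : 0 < yq) (hsp : 0 < sp) (hsq : 0 < sq)
    (hwp : 0 ≤ wp) (hwq : 0 ≤ wq)
    (hFp : 0 < yp * sp - wp) (hFq : 0 < yq * sq - wq) :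
    2 * Real.sqrt ((yp * sp - wp) * (yq * sq - wq)) ≤
      yp * sq + yq * sp - 2 * (Real.sqrt wp * Real.sqrt wq) := by
  have hc2 : Real.sqrt wp ^ 2 = wp := Real.sq_sqrt hwp
  have hd2 : Real.sqrt wq ^ 2 = wq := Real.sq_sqrt hwq
  have hsu2 : Real.sqrt (yp * sp) ^ 2 = yp * sp := Real.sq_sqrt (by positivity)
  have hsv2 : Real.sqrt (yq * sq) ^ 2 = yq * sq := Real.sq_sqrt (by positivity)
  have hsA2 : Real.sqrt (yp * sq) ^ 2 = yp * sq := Real.sq_sqrt (by positivity)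
  have hsB2 : Real.sqrt (yq * sp) ^ 2 = yq * sp := Real.sq_sqrt (by positivity)
  have hE2 : Real.sqrt ((yp * sp - wp) * (yq * sq - wq)) ^ 2
      = ((Real.sqrt (yp * sp)) ^ 2 - (Real.sqrt wp) ^ 2)
        * ((Real.sqrt (yq * sq)) ^ 2 - (Real.sqrt wq) ^ 2) := by
    rw [hsu2, hsv2, hc2, hd2]; exact Real.sq_sqrt (by positivity)
  have hcu : Real.sqrt wp ≤ Real.sqrt (yp * sp) := Real.sqrt_le_sqrt (by nlinarith)
  have hdv : Real.sqrt wq ≤ Real.sqrt (yq * sq) := Real.sqrt_le_sqrt (by nlinarith)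
  have hEle := alg_ineq19 _ _ _ _ _ (Real.sqrt_nonneg wp) (Real.sqrt_nonneg wq)
    hE2 hcu hdv
  have hprod : Real.sqrt (yp * sp) * Real.sqrt (yq * sq)
      = Real.sqrt (yp * sq) * Real.sqrt (yq * sp) := by
    rw [← Real.sqrt_mul (by positivity), ← Real.sqrt_mul (by positivity)]
    ring_nf
  nlinarith [sq_nonneg (Real.sqrt (yp * sq) - Real.sqrt (yq * sp))]

/-- `F` for a point of the domain. -/
private def Fq19 (n : ℕ) (p : ℝ × (Fin n → ℝ) × (Fin n → ℂ)) : ℝ :=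
  p.1 * ∑ k, p.2.1 k - ∑ k, Complex.normSq (p.2.2 k)

private lemma normSq_combo19 (a b : ℝ) (u v : ℂ) :
    Complex.normSq (a • u + b • v) =
      a ^ 2 * Complex.normSq u + b ^ 2 * Complex.normSq v
        + 2 * a * b * (u * (starRingEnd ℂ) v).re := by
  simp [Complex.normSq_apply, Complex.real_smul, Complex.add_re, Complex.add_im,
    Complex.mul_re, Complex.mul_im, Complex.conj_re, Complex.conj_im,
    Complex.ofReal_re, Complex.ofReal_im]
  ring

private lemma cauchy_schwarz_T19 {n : ℕ} (u v : Fin n → ℂ) :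
    ∑ k, (u k * (starRingEnd ℂ) (v k)).re ≤
      Real.sqrt (∑ k, Complex.normSq (u k)) * Real.sqrt (∑ k, Complex.normSq (v k)) := by
  have h1 : ∑ k, (u k * (starRingEnd ℂ) (v k)).re ≤
      ∑ k, ‖u k‖ * ‖v k‖ := by
    refine Finset.sum_le_sum fun k _ => ?_
    calc (u k * (starRingEnd ℂ) (v k)).re ≤ ‖u k * (starRingEnd ℂ) (v k)‖ :=
          Complex.re_le_norm _
      _ = ‖u k‖ * ‖v k‖ := by rw [norm_mul, Complex.norm_conj]
  refine h1.trans ?_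
  have h2 := Real.sum_mul_le_sqrt_mul_sqrt Finset.univ
    (fun k => ‖u k‖) (fun k => ‖v k‖)
  simpa [Complex.sq_norm] using h2

private lemma Fq19_combo {n : ℕ} (p q : ℝ × (Fin n → ℝ) × (Fin n → ℂ)) (a b : ℝ) :
    Fq19 n (a • p + b • q)
      = a ^ 2 * Fq19 n p + b ^ 2 * Fq19 n q
        + a * b * (p.1 * ∑ k, q.2.1 k + q.1 * ∑ k, p.2.1 k
            - 2 * ∑ k, (p.2.2 k * (starRingEnd ℂ) (q.2.2 k)).re) := by
  simp only [Fq19, Prod.fst_add, Prod.snd_add, Prod.smul_fst, Prod.smul_snd,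
    Pi.add_apply, Pi.smul_apply, smul_eq_mul, normSq_combo19]
  rw [Finset.sum_add_distrib, Finset.sum_add_distrib, ← Finset.mul_sum, ← Finset.mul_sum,
    ← Finset.mul_sum, Finset.sum_add_distrib, ← Finset.mul_sum, ← Finset.mul_sum]
  ring

/-- The main quantitative estimate: `F(a•p+b•q) ≥ (a√F(p)+b√F(q))²`. -/
private lemma Fq19_combo_ge {n : ℕ} (p q : ℝ × (Fin n → ℝ) × (Fin n → ℂ)) (a b : ℝ)
    (ha : 0 ≤ a) (hb : 0 ≤ b)
    (hyp : 0 < p.1) (hsp : 0 < ∑ k, p.2.1 k) (hFp : 0 < Fq19 n p)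
    (hyq : 0 < q.1) (hsq : 0 < ∑ k, q.2.1 k) (hFq : 0 < Fq19 n q) :
    (a * Real.sqrt (Fq19 n p) + b * Real.sqrt (Fq19 n q)) ^ 2 ≤ Fq19 n (a • p + b • q) := by
  have hwp : (0:ℝ) ≤ ∑ k, Complex.normSq (p.2.2 k) :=
    Finset.sum_nonneg fun k _ => Complex.normSq_nonneg _
  have hwq : (0:ℝ) ≤ ∑ k, Complex.normSq (q.2.2 k) :=
    Finset.sum_nonneg fun k _ => Complex.normSq_nonneg _
  have hT := cauchy_schwarz_T19 p.2.2 q.2.2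
  have hkey := key_ineq19 p.1 q.1 (∑ k, p.2.1 k) (∑ k, q.2.1 k)
    (∑ k, Complex.normSq (p.2.2 k)) (∑ k, Complex.normSq (q.2.2 k))
    hyp hyq hsp hsq hwp hwq hFp hFq
  have hR : 2 * Real.sqrt (Fq19 n p * Fq19 n q) ≤
      p.1 * ∑ k, q.2.1 k + q.1 * ∑ k, p.2.1 k
        - 2 * ∑ k, (p.2.2 k * (starRingEnd ℂ) (q.2.2 k)).re := by
    have := hkey
    simp only [Fq19]
    nlinarith
  rw [Fq19_combo]
  have hsqrt : Real.sqrt (Fq19 n p) * Real.sqrt (Fq19 n q)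
      = Real.sqrt (Fq19 n p * Fq19 n q) := (Real.sqrt_mul hFp.le _).symm
  have h1 : Real.sqrt (Fq19 n p) ^ 2 = Fq19 n p := Real.sq_sqrt hFp.le
  have h2 : Real.sqrt (Fq19 n q) ^ 2 = Fq19 n q := Real.sq_sqrt hFq.le
  nlinarith [mul_nonneg ha hb]


/-- The complex analogue of Donaldson's concavity lemma: for the arrowhead-type quantity
`F = y·Σₖ xₖ − Σₖ |zₖ|²`, the function `log F` is concave on the region
`{y > 0, Σ xₖ > 0, F > 0}`. -/
theorem stmt_19 (n : ℕ) :
    ConcaveOn ℝ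
      {p : ℝ × (Fin n → ℝ) × (Fin n → ℂ) |
        0 < p.1 ∧ 0 < ∑ k, p.2.1 k ∧
          0 < p.1 * ∑ k, p.2.1 k - ∑ k, Complex.normSq (p.2.2 k)}
      (fun p => Real.log (p.1 * ∑ k, p.2.1 k - ∑ k, Complex.normSq (p.2.2 k))) := by
  have hmain : ∀ (p q : ℝ × (Fin n → ℝ) × (Fin n → ℂ)) (a b : ℝ), 0 ≤ a → 0 ≤ b →
      a + b = 1 →
      (0 < p.1 ∧ 0 < ∑ k, p.2.1 k ∧ 0 < Fq19 n p) →
      (0 < q.1 ∧ 0 < ∑ k, q.2.1 k ∧ 0 < Fq19 n q) →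
      (0 < (a • p + b • q).1 ∧ 0 < ∑ k, (a • p + b • q).2.1 k ∧
        (a * Real.sqrt (Fq19 n p) + b * Real.sqrt (Fq19 n q)) ^ 2 ≤ Fq19 n (a • p + b • q)) := by
    intro p q a b ha hb hab hp hq
    obtain ⟨hyp, hsp, hFp⟩ := hp
    obtain ⟨hyq, hsq, hFq⟩ := hq
    refine ⟨?_, ?_, Fq19_combo_ge p q a b ha hb hyp hsp hFp hyq hsq hFq⟩
    · have := (convex_Ioi (0:ℝ)) hyp hyq ha hb hab
      simpa using this
    · have := (convex_Ioi (0:ℝ)) hsp hsq ha hb hab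
      have heq : ∀ k : Fin n, (a • p + b • q).2.1 k = a * p.2.1 k + b * q.2.1 k :=
        fun k => rfl
      rw [Finset.sum_congr rfl (fun k _ => heq k), Finset.sum_add_distrib,
        ← Finset.mul_sum, ← Finset.mul_sum]
      simpa using this
  have hpos : ∀ (p q : ℝ × (Fin n → ℝ) × (Fin n → ℂ)) (a b : ℝ), 0 ≤ a → 0 ≤ b →
      a + b = 1 → 0 < Fq19 n p → 0 < Fq19 n q →
      0 < a * Real.sqrt (Fq19 n p) + b * Real.sqrt (Fq19 n q) := by
    intro p q a b ha hb hab hFp hFq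
    have h1 : Real.sqrt (Fq19 n p) ∈ Set.Ioi (0:ℝ) := Real.sqrt_pos.2 hFp
    have h2 : Real.sqrt (Fq19 n q) ∈ Set.Ioi (0:ℝ) := Real.sqrt_pos.2 hFq
    have := (convex_Ioi (0:ℝ)) h1 h2 ha hb hab
    simpa using this
  constructor
  · -- convexity of the set
    intro p hp q hq a b ha hb hab
    obtain ⟨h1, h2, h3⟩ := hmain p q a b ha hb hab hp hq
    refine ⟨h1, h2, ?_⟩
    have := hpos p q a b ha hb hab hp.2.2 hq.2.2
    calc (0:ℝ) < (a * Real.sqrt (Fq19 n p) + b * Real.sqrt (Fq19 n q)) ^ 2 := by positivity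
      _ ≤ Fq19 n (a • p + b • q) := h3
  · -- the concavity inequality
    intro p hp q hq a b ha hb hab
    obtain ⟨h1, h2, h3⟩ := hmain p q a b ha hb hab hp hq
    obtain ⟨hyp, hsp, hFp⟩ := hp
    obtain ⟨hyq, hsq, hFq⟩ := hq
    have hcomb : 0 < a * Real.sqrt (Fq19 n p) + b * Real.sqrt (Fq19 n q) :=
      hpos p q a b ha hb hab hFp hFq
    have hFcomb : 0 < Fq19 n (a • p + b • q) := lt_of_lt_of_le (by positivity) h3
    show a • Real.log (Fq19 n p) + b • Real.log (Fq19 n q) ≤ Real.log (Fq19 n (a • p + b • q))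
    have hFp' : 0 < Fq19 n p := hFp
    have hFq' : 0 < Fq19 n q := hFq
    simp only [smul_eq_mul]
    calc a * Real.log (Fq19 n p) + b * Real.log (Fq19 n q)
        = 2 * (a * Real.log (Real.sqrt (Fq19 n p)) + b * Real.log (Real.sqrt (Fq19 n q))) := by
          rw [Real.log_sqrt hFp'.le, Real.log_sqrt hFq'.le]
          ring
      _ ≤ 2 * Real.log (a * Real.sqrt (Fq19 n p) + b * Real.sqrt (Fq19 n q)) := by
          have hlog := strictConcaveOn_log_Ioi.concaveOn.2
            (Real.sqrt_pos.2 hFp' : Real.sqrt (Fq19 n p) ∈ Set.Ioi (0:ℝ))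
            (Real.sqrt_pos.2 hFq' : Real.sqrt (Fq19 n q) ∈ Set.Ioi (0:ℝ)) ha hb hab
          simp only [smul_eq_mul] at hlog
          linarith
      _ = Real.log ((a * Real.sqrt (Fq19 n p) + b * Real.sqrt (Fq19 n q)) ^ 2) := by
          rw [Real.log_pow]; push_cast; ring
      _ ≤ Real.log (Fq19 n (a • p + b • q)) :=
          Real.log_le_log (by positivity) h3
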